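/- Let G be a finitely generated group and H a normal subgroup with G/H solvable. If for all a, b ∈ G the subgroup ⟨b^{-n} a b^n : n ∈ ℤ⟩ is finitely generated, then H is finitely generated. -/

import Mathlib

open Subgroup

section Helpers

variable {G : Type*} [Group G]

private theorem myFG_sup {P Q : Subgroup G} (hP : P.FG) (hQ : Q.FG) : (P ⊔ Q).FG := by
  classical
  obtain ⟨s, rfl⟩ := hP; obtain ⟨t, rfl⟩ := hQ
  exact ⟨s ∪ t, by rw [Finset.coe_union, Subgroup.closure_union]⟩

private theorem myFG_bot : (⊥ : Subgroup G).FG :=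
  ⟨∅, by simp⟩

private theorem myFG_map {G' : Type*} [Group G'] {P : Subgroup G} (h : P.FG) (f : G →* G') :
    (P.map f).FG := by
  classical
  obtain ⟨s, rfl⟩ := h
  exact ⟨s.image f, by rw [Finset.coe_image, MonoidHom.map_closure]⟩

private theorem myFG_of_map_injective {G' : Type*} [Group G'] {P : Subgroup G} (f : G →* G')
    (hf : Function.Injective f) (h : (P.map f).FG) : P.FG := by
  rw [← Group.fg_iff_subgroup_fg] at h ⊢
  exact Group.fg_of_surjective (f := (P.equivMapOfInjective f hf).symm.toMonoidHom)
    (P.equivMapOfInjective f hf).symm.surjective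

private theorem myFG_biSup {ι : Type*} (s : Finset ι) (f : ι → Subgroup G)
    (h : ∀ i ∈ s, (f i).FG) : (⨆ i ∈ (s : Set ι), f i).FG := by
  classical
  induction s using Finset.induction with
  | empty => simpa using myFG_bot
  | @insert a s ha ih =>
      rw [Finset.coe_insert, iSup_insert]
      exact myFG_sup (h a (Finset.mem_insert_self a s))
        (ih fun i hi => h i (Finset.mem_insert_of_mem hi))

/-- The conjugates hypothesis descends to subgroups. -/
private theorem hconj_restrict
    (hconj : ∀ a b : G, (Subgroup.closure {x : G | ∃ n : ℤ, x = b ^ (-n) * a * b ^ n}).FG)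
    (K : Subgroup G) :
    ∀ a b : ↥K, (Subgroup.closure {x : ↥K | ∃ n : ℤ, x = b ^ (-n) * a * b ^ n}).FG := by
  intro a b
  apply myFG_of_map_injective K.subtype K.subtype_injective
  rw [MonoidHom.map_closure]
  have himg : K.subtype '' {x : ↥K | ∃ n : ℤ, x = b ^ (-n) * a * b ^ n} =
      {x : G | ∃ n : ℤ, x = (b : G) ^ (-n) * (a : G) * (b : G) ^ n} := by
    ext x
    constructor
    · rintro ⟨y, ⟨n, rfl⟩, rfl⟩
      exact ⟨n, rfl⟩
    · rintro ⟨n, rfl⟩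
      exact ⟨b ^ (-n) * a * b ^ n, ⟨n, rfl⟩, rfl⟩
  rw [himg]
  exact hconj (a : G) (b : G)

/-- Core lemma (Milnor's trick): if `G` is f.g., `H ⊴ G` with `G/H` generated by the image of
`t`, and the conjugate subgroups are f.g., then `H` is f.g. -/
private theorem key_cyclic (hfg : Group.FG G) (H : Subgroup G) [hN : H.Normal] (t : G)
    (ht : ∀ g : G, ∃ n : ℤ, g * t ^ (-n) ∈ H)
    (hconj : ∀ a b : G, (Subgroup.closure {x : G | ∃ n : ℤ, x = b ^ (-n) * a * b ^ n}).FG) :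
    H.FG := by
  classical
  obtain ⟨S, hS⟩ := Group.fg_def.mp hfg
  choose nn hnn using ht
  set C : G → Set G := fun a => {x : G | ∃ n : ℤ, x = t ^ (-n) * a * t ^ n} with hC
  set A : G → G := fun s => s * t ^ (-(nn s)) with hA
  set N : Subgroup G := ⨆ s ∈ (S : Set G), Subgroup.closure (C (A s)) with hNdef
  have hgen_mem : ∀ s ∈ (S : Set G), ∀ n : ℤ, t ^ (-n) * A s * t ^ n ∈ N := by
    intro s hs n
    have : t ^ (-n) * A s * t ^ n ∈ Subgroup.closure (C (A s)) :=
      subset_closure ⟨n, rfl⟩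
    exact (le_iSup₂ (f := fun s (_ : s ∈ (S : Set G)) => Subgroup.closure (C (A s))) s hs) this
  have hNle : N ≤ H := by
    apply iSup₂_le
    intro s hs
    rw [closure_le]
    rintro x ⟨n, rfl⟩
    have h1 : t ^ (-n) * A s * (t ^ (-n))⁻¹ ∈ H := hN.conj_mem _ (hnn s) _
    simpa [zpow_neg] using h1
  -- conjugation invariance of N
  have hinv : ∀ (k : ℤ) (x : G), x ∈ N → t ^ (-k) * x * t ^ k ∈ N := by
    intro k x hx
    have : N = Subgroup.closure (⋃ s ∈ (S : Set G), C (A s)) := by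
      rw [Subgroup.closure_iUnion]
      simp only [Subgroup.closure_iUnion]
      exact hNdef
    rw [this] at hx
    induction hx using Subgroup.closure_induction with
    | mem y hy =>
        simp only [Set.mem_iUnion] at hy
        obtain ⟨s, hs, n, rfl⟩ := hy
        have heq : t ^ (-k) * (t ^ (-n) * A s * t ^ n) * t ^ k
            = t ^ (-(n + k)) * A s * t ^ (n + k) := by
          rw [neg_add, zpow_add, zpow_add]; group
        rw [heq]
        exact hgen_mem s hs (n + k)
    | one => simpa using N.one_mem
    | mul y z hy hz ihy ihz =>
        have heq : t ^ (-k) * (y * z) * t ^ k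
            = (t ^ (-k) * y * t ^ k) * (t ^ (-k) * z * t ^ k) := by group
        rw [heq]; exact N.mul_mem ihy ihz
    | inv y hy ihy =>
        have heq : t ^ (-k) * y⁻¹ * t ^ k = (t ^ (-k) * y * t ^ k)⁻¹ := by group
        rw [heq]; exact N.inv_mem ihy
  -- the subgroup of elements expressible as (element of N) * t^k
  set T : Subgroup G :=
    { carrier := {g : G | ∃ k : ℤ, g * t ^ (-k) ∈ N}
      one_mem' := ⟨0, by simpa using N.one_mem⟩
      mul_mem' := by
        rintro g g' ⟨k, hk⟩ ⟨k', hk'⟩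
        refine ⟨k + k', ?_⟩
        have heq : g * g' * t ^ (-(k + k'))
            = (g * t ^ (-k)) * (t ^ (-(-k)) * (g' * t ^ (-k')) * t ^ (-k)) := by
          rw [neg_add, zpow_add, zpow_neg, zpow_neg, zpow_neg]; group
        rw [heq]
        exact N.mul_mem hk (hinv (-k) _ hk')
      inv_mem' := by
        rintro g ⟨k, hk⟩
        refine ⟨-k, ?_⟩
        have heq : g⁻¹ * t ^ (-(-k)) = t ^ (-k) * (g * t ^ (-k))⁻¹ * t ^ k := by
          rw [neg_neg, zpow_neg]; group
        rw [heq]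
        exact hinv k _ (N.inv_mem hk) } with hT
  have hTall : ∀ g : G, ∃ k : ℤ, g * t ^ (-k) ∈ N := by
    intro g
    have htop : (⊤ : Subgroup G) ≤ T := by
      rw [← hS, closure_le]
      intro s hs
      refine ⟨nn s, ?_⟩
      have : A s ∈ N := by
        have := hgen_mem s hs 0
        simpa using this
      exact this
    exact htop (Subgroup.mem_top g)
  -- the subgroup of exponents k with t^k ∈ H
  set M : AddSubgroup ℤ :=
    { carrier := {k : ℤ | t ^ k ∈ H}
      zero_mem' := by simpa using H.one_mem
      add_mem' := by
        intro a b ha hb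
        simpa [zpow_add] using H.mul_mem ha hb
      neg_mem' := by
        intro a ha
        simpa [zpow_neg] using H.inv_mem ha } with hM
  obtain ⟨m, hm⟩ := Int.subgroup_cyclic M
  have hmH : t ^ m ∈ H := by
    have : m ∈ M := by rw [hm]; exact AddSubgroup.subset_closure rfl
    exact this
  have hfinal : H = N ⊔ zpowers (t ^ m) := by
    apply le_antisymm
    · intro h hh
      obtain ⟨k, hk⟩ := hTall h
      have htk : t ^ k ∈ H := by
        have h1 : (h * t ^ (-k))⁻¹ * h ∈ H := H.mul_mem (H.inv_mem (hNle hk)) hh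
        have heq : t ^ k = (h * t ^ (-k))⁻¹ * h := by
          rw [zpow_neg]; group
        rw [heq]; exact h1
      have hkM : k ∈ M := htk
      rw [hm] at hkM
      obtain ⟨q, hq⟩ := AddSubgroup.mem_closure_singleton.mp hkM
      have hpow : (t ^ m) ^ q = t ^ k := by
        rw [← zpow_mul, ← hq, smul_eq_mul, mul_comm]
      have heq : h = (h * t ^ (-k)) * (t ^ m) ^ q := by
        rw [hpow, zpow_neg]; group
      rw [heq]
      exact Subgroup.mul_mem _ (Subgroup.mem_sup_left hk)
        (Subgroup.mem_sup_right ⟨q, rfl⟩)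
    · exact sup_le hNle (zpowers_le.mpr hmH)
  rw [hfinal]
  refine myFG_sup ?_ ?_
  · exact myFG_biSup S (fun s => Subgroup.closure (C (A s))) (fun s _ => hconj (A s) t)
  · exact ⟨{t ^ m}, by rw [Finset.coe_singleton, ← zpowers_eq_closure]⟩

end Helpers

section AbelianStep

universe u

/-- If `G` is f.g. (witnessed by `S` modulo `H`), `H ⊴ G` with `G/H` abelian, and conjugate
subgroups are f.g., then `H` is f.g. Induction on the size of the generating set. -/
private theorem abelian_step : ∀ (n : ℕ) {G : Type u} [Group G], Group.FG G →
    ∀ (H : Subgroup G), H.Normal →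
    (∀ a b : G, a * b * a⁻¹ * b⁻¹ ∈ H) →
    (∀ a b : G, (Subgroup.closure {x : G | ∃ k : ℤ, x = b ^ (-k) * a * b ^ k}).FG) →
    ∀ S : Finset G, S.card ≤ n → Subgroup.closure (S : Set G) ⊔ H = ⊤ → H.FG := by
  intro n
  induction n with
  | zero =>
      intro G _ hfg H _ _ _ S hcard hgen
      have : S = ∅ := Finset.card_eq_zero.mp (Nat.le_zero.mp hcard)
      subst this
      simp only [Finset.coe_empty, Subgroup.closure_empty, bot_sup_eq] at hgen
      rw [hgen]
      exact hfg.out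
  | succ n ih =>
      intro G _ hfg H hHnorm hab hconj S hcard hgen
      haveI := hHnorm
      rcases S.eq_empty_or_nonempty with rfl | ⟨t, htS⟩
      · exact ih hfg H hHnorm hab hconj ∅ (Nat.zero_le n) hgen
      classical
      set S' : Finset G := S.erase t with hS'
      set K : Subgroup G := Subgroup.closure (S' : Set G) ⊔ H with hK
      have hHK : H ≤ K := le_sup_right
      haveI hKnorm : K.Normal := by
        constructor
        intro k hk g
        have heq : g * k * g⁻¹ = (g * k * g⁻¹ * k⁻¹) * k := by group
        rw [heq]
        exact K.mul_mem (hHK (hab g k)) hk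
      have hcyc : ∀ g : G, ∃ k : ℤ, g * t ^ (-k) ∈ K := by
        intro g
        have hSsplit : (S : Set G) = insert t (S' : Set G) := by
          rw [hS', ← Finset.coe_insert, Finset.insert_erase htS]
        have hg : g ∈ zpowers t ⊔ K := by
          have : (⊤ : Subgroup G) = zpowers t ⊔ K := by
            rw [← hgen, hSsplit, Set.insert_eq, Subgroup.closure_union, hK,
              ← zpowers_eq_closure, sup_assoc]
          rw [← this]
          exact Subgroup.mem_top g
        rw [← SetLike.mem_coe, Subgroup.mul_normal (zpowers t) K] at hg
        rw [Set.mem_mul] at hg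
        obtain ⟨u, hu, c, hc, rfl⟩ := hg
        rw [SetLike.mem_coe, Subgroup.mem_zpowers_iff] at hu
        obtain ⟨k, rfl⟩ := hu
        refine ⟨k, ?_⟩
        have h1 : t ^ k * c * (t ^ k)⁻¹ ∈ K := hKnorm.conj_mem c hc (t ^ k)
        have heq : t ^ k * c * t ^ (-k) = t ^ k * c * (t ^ k)⁻¹ := by
          rw [zpow_neg]
        rw [heq]
        exact h1
      have hKfg : K.FG := key_cyclic hfg K t hcyc hconj
      haveI : Group.FG ↥K := (Group.fg_iff_subgroup_fg K).mpr hKfg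
      -- move into K
      set HK : Subgroup ↥K := H.subgroupOf K with hHKdef
      have hHKnorm : HK.Normal := hHnorm.subgroupOf K
      have hab' : ∀ a b : ↥K, a * b * a⁻¹ * b⁻¹ ∈ HK := by
        intro a b
        rw [hHKdef, Subgroup.mem_subgroupOf]
        push_cast
        exact hab (a : G) (b : G)
      have hconj' := hconj_restrict hconj K
      -- generating set for K
      have hS'K : (S' : Set G) ⊆ (K : Set G) := fun x hx =>
        (le_sup_left : Subgroup.closure (S' : Set G) ≤ K)
          (subset_closure hx : x ∈ Subgroup.closure (S' : Set G))
      set S'' : Finset ↥K := S'.attach.image (fun x => (⟨x.1, hS'K x.2⟩ : ↥K)) with hS''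
      have hcard'' : S''.card ≤ n := by
        calc S''.card ≤ S'.attach.card := Finset.card_image_le
          _ = S'.card := Finset.card_attach
          _ = S.card - 1 := by rw [hS', Finset.card_erase_of_mem htS]
          _ ≤ n := by omega
      have himg : K.subtype '' (S'' : Set ↥K) = (S' : Set G) := by
        ext x
        constructor
        · rintro ⟨y, hy, rfl⟩
          rw [Finset.mem_coe, hS''] at hy
          obtain ⟨z, _, rfl⟩ := Finset.mem_image.mp hy
          exact z.2
        · intro hx
          refine ⟨⟨x, hS'K hx⟩, ?_, rfl⟩
          rw [Finset.mem_coe, hS'']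
          exact Finset.mem_image.mpr ⟨⟨x, hx⟩, Finset.mem_attach _ _, rfl⟩
      have hgen'' : Subgroup.closure (S'' : Set ↥K) ⊔ HK = ⊤ := by
        apply Subgroup.map_injective K.subtype_injective
        rw [Subgroup.map_sup, MonoidHom.map_closure, himg, hHKdef,
          Subgroup.subgroupOf_map_subtype, inf_eq_left.mpr hHK,
          ← MonoidHom.range_eq_map, Subgroup.range_subtype]
      have hHKfg : HK.FG := ih ‹Group.FG ↥K› HK hHKnorm hab' hconj' S'' hcard'' hgen''
      have : (HK.map K.subtype).FG := myFG_map hHKfg K.subtype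
      rwa [hHKdef, Subgroup.subgroupOf_map_subtype, inf_eq_left.mpr hHK] at this

end AbelianStep

/-- If `G` is finitely generated, `H ⊴ G` with `G/H` solvable, and for all `a b : G` the
subgroup `⟨b⁻ⁿ a bⁿ : n ∈ ℤ⟩` is finitely generated, then `H` is finitely generated. -/
theorem fg_of_conjugates_fg_of_solvable_quotient {G : Type*} [Group G]
    (hfg : Group.FG G) (H : Subgroup G) [H.Normal] (hsolv : IsSolvable (G ⧸ H))
    (hconj : ∀ a b : G, (Subgroup.closure {x : G | ∃ n : ℤ, x = b ^ (-n) * a * b ^ n}).FG) :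
    H.FG := by
  classical
  obtain ⟨n, hn⟩ := hsolv.solvable
  set π : G →* G ⧸ H := QuotientGroup.mk' H with hπdef
  have hπsurj : Function.Surjective π := QuotientGroup.mk'_surjective H
  have hmap : ∀ i, Subgroup.map π (derivedSeries G i) = derivedSeries (G ⧸ H) i :=
    fun i => map_derivedSeries_eq hπsurj i
  have hkerπ : π.ker = H := QuotientGroup.ker_mk' H
  have hDn : derivedSeries G n ≤ H := by
    have h1 : Subgroup.map π (derivedSeries G n) = ⊥ := by rw [hmap n, hn]
    rw [← hkerπ]
    exact (Subgroup.map_eq_bot_iff _).mp h1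
  have hmapH : Subgroup.map π H = ⊥ := by
    rw [Subgroup.map_eq_bot_iff _, hkerπ]
  have claim : ∀ i, (derivedSeries G i ⊔ H).FG := by
    intro i
    induction i with
    | zero => rw [derivedSeries_zero, top_sup_eq]; exact hfg.out
    | succ i ihi =>
        set K : Subgroup G := derivedSeries G i ⊔ H with hKdef
        set K' : Subgroup G := derivedSeries G (i + 1) ⊔ H with hK'def
        have hDsucc : derivedSeries G (i + 1) ≤ derivedSeries G i := by
          rw [derivedSeries_succ]
          haveI := derivedSeries_normal G i
          exact commutator_le_left _ _
        have hle : K' ≤ K := sup_le_sup_right hDsucc H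
        haveI : Group.FG ↥K := (Group.fg_iff_subgroup_fg K).mpr ihi
        haveI hK'norm : K'.Normal := by
          rw [hK'def]
          haveI := derivedSeries_normal G (i + 1)
          infer_instance
        have hK'K : (K'.subgroupOf K).Normal := hK'norm.subgroupOf K
        -- abelianness of K/K'
        have hab' : ∀ a b : ↥K, a * b * a⁻¹ * b⁻¹ ∈ K'.subgroupOf K := by
          intro a b
          rw [Subgroup.mem_subgroupOf]
          push_cast
          have hπK : ∀ x : ↥K, π (x : G) ∈ derivedSeries (G ⧸ H) i := by
            intro x
            have hx : π (x : G) ∈ Subgroup.map π (derivedSeries G i ⊔ H) :=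
              Subgroup.mem_map_of_mem π x.2
            rwa [Subgroup.map_sup, hmap i, hmapH, sup_bot_eq] at hx
          have hc : π ((a : G) * b * (a : G)⁻¹ * (b : G)⁻¹) ∈ derivedSeries (G ⧸ H) (i + 1) := by
            have h1 : π (a : G) * π (b : G) * (π (a : G))⁻¹ * (π (b : G))⁻¹ ∈ derivedSeries (G ⧸ H) (i + 1) := by
              rw [derivedSeries_succ]
              exact commutator_mem_commutator (hπK a) (hπK b)
            simpa [commutatorElement_def] using h1
          rw [← hmap (i + 1)] at hc
          obtain ⟨y, hy, hyx⟩ := hc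
          have hker : y⁻¹ * ((a : G) * b * (a : G)⁻¹ * (b : G)⁻¹) ∈ H := by
            rw [← hkerπ, MonoidHom.mem_ker, map_mul, map_inv, hyx, inv_mul_cancel]
          have heq : (a : G) * b * (a : G)⁻¹ * (b : G)⁻¹
              = y * (y⁻¹ * ((a : G) * b * (a : G)⁻¹ * (b : G)⁻¹)) := by group
          rw [heq]
          exact K'.mul_mem ((le_sup_left : derivedSeries G (i + 1) ≤ K') hy) ((le_sup_right : H ≤ K') hker)
        have hconj' := hconj_restrict hconj K
        obtain ⟨S, hS⟩ := Group.fg_def.mp ‹Group.FG ↥K›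
        have hgen' : Subgroup.closure (S : Set ↥K) ⊔ K'.subgroupOf K = ⊤ := by
          rw [hS, top_sup_eq]
        have hfgK' : (K'.subgroupOf K).FG :=
          abelian_step S.card ‹Group.FG ↥K› (K'.subgroupOf K) hK'K hab' hconj' S le_rfl hgen'
        have : ((K'.subgroupOf K).map K.subtype).FG := myFG_map hfgK' K.subtype
        rwa [Subgroup.subgroupOf_map_subtype, inf_eq_left.mpr hle] at this
  have := claim n
  rwa [sup_eq_right.mpr hDn] at this
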